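/- arXiv:2504.00004 — 2 statements merged into one kernel-verified Lean document; each statement's English description precedes it below -/
import Mathlib

section
/- For every natural number n and every natural number r ≥ 1, ∑_{k=1}^{n} (−1)^{k−1} · (C(n,k)/C(k+r, r)) · H_k = (r/(n+r)) · (H_{n+r} − H_r) + n/(n+r)², as an identity of real numbers. -/
open Finset

noncomputable def H : ℕ → ℝ := fun m => ∑ j ∈ range m, (1 : ℝ) / (j + 1)

lemma H_Icc (m : ℕ) : H m = ∑ i ∈ Icc 1 m, (1:ℝ)/i := by
  rw [H, ← Finset.Ico_add_one_right_eq_Icc, Finset.sum_Ico_eq_sum_range]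
  simp [add_comm]

lemma prefixAlt (M r t : ℕ) :
    ∑ k ∈ Icc 1 t, (-1:ℝ)^(k-1) * ((M+1).choose (k+r) : ℝ)
      = (M.choose r : ℝ) - (-1)^t * (M.choose (t+r) : ℝ) := by
  induction t with
  | zero => simp
  | succ t ih =>
    rw [Finset.sum_Icc_succ_top (by omega : 1 ≤ t + 1), ih]
    have hp : ((M+1).choose (t+1+r) : ℝ) = (M.choose (t+r) : ℝ) + (M.choose (t+r+1) : ℝ) := by
      have := Nat.choose_succ_succ' M (t+r)
      have h2 : t + 1 + r = t + r + 1 := by omega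
      rw [h2]
      exact_mod_cast congrArg (Nat.cast : ℕ → ℝ) this
    simp only [Nat.add_sub_cancel]
    rw [hp]
    have h3 : t + 1 + r = t + r + 1 := by omega
    rw [h3]
    ring

lemma pascal_sum (n : ℕ) (γ : ℕ → ℝ) :
    ∑ j ∈ range (n+2), (-1:ℝ)^j * ((n+1).choose j : ℝ) * γ j
      = ∑ i ∈ range (n+1), (-1:ℝ)^i * (n.choose i : ℝ) * γ i
        - ∑ i ∈ range (n+1), (-1:ℝ)^i * (n.choose i : ℝ) * γ (i+1) := by
  rw [Finset.sum_range_succ' (fun j => (-1:ℝ)^j * ((n+1).choose j : ℝ) * γ j) (n+1)]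
  rw [Finset.sum_range_succ' (fun i => (-1:ℝ)^i * (n.choose i : ℝ) * γ i) n]
  have hsplit : ∀ i ∈ range (n+1), (-1:ℝ)^(i+1) * ((n+1).choose (i+1):ℝ) * γ (i+1)
      = -((-1:ℝ)^i * (n.choose i:ℝ) * γ (i+1)) + (-1:ℝ)^(i+1) * (n.choose (i+1):ℝ) * γ (i+1) := by
    intro i _
    rw [Nat.choose_succ_succ']
    push_cast
    ring
  rw [Finset.sum_congr rfl hsplit, Finset.sum_add_distrib]
  rw [Finset.sum_range_succ (fun i => (-1:ℝ)^(i+1) * (n.choose (i+1):ℝ) * γ (i+1)) n]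
  simp only [Nat.choose_succ_self, Nat.cast_zero, mul_zero, zero_mul, add_zero,
    Finset.sum_neg_distrib, Nat.choose_zero_right, Nat.cast_one]
  ring

lemma Icc_to_range (m : ℕ) (f : ℕ → ℝ) : ∑ k ∈ Icc 1 m, f k = ∑ i ∈ range m, f (i+1) := by
  rw [← Finset.Ico_add_one_right_eq_Icc, Finset.sum_Ico_eq_sum_range]
  simp [add_comm]

lemma alt_one (m : ℕ) : ∑ k ∈ Icc 1 (m+1), (-1:ℝ)^(k-1) * ((m+1).choose k : ℝ) = 1 := by
  have := prefixAlt m 0 (m+1)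
  simp only [add_zero] at this
  rw [this, Nat.choose_zero_right, Nat.choose_succ_self]
  simp

lemma choose_pos_real (a b : ℕ) (h : b ≤ a) : (0:ℝ) < (a.choose b : ℝ) := by
  exact_mod_cast Nat.choose_pos h

lemma inv_choose_step (i s : ℕ) :
    (1:ℝ)/((i+s+2).choose (s+2) : ℝ)
      = ((s:ℝ)+2)/((s:ℝ)+1) * (1/((i+s+1).choose (s+1) : ℝ) - 1/((i+s+2).choose (s+1) : ℝ)) := by
  have ha : (0:ℝ) < ((i+s+1).choose (s+1) : ℝ) := choose_pos_real _ _ (by omega)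
  have hb : (0:ℝ) < ((i+s+2).choose (s+1) : ℝ) := choose_pos_real _ _ (by omega)
  have hc : (0:ℝ) < ((i+s+2).choose (s+2) : ℝ) := choose_pos_real _ _ (by omega)
  have e1 : ((i+s+1).choose (s+1) : ℝ) * ((s:ℝ)+1) = ((i+s+1).choose s : ℝ) * ((i:ℝ)+1) := by
    have := Nat.choose_succ_right_eq (i+s+1) s
    have h2 : i + s + 1 - s = i + 1 := by omega
    rw [h2] at this
    exact_mod_cast this
  have e2 : ((i+s+2).choose (s+2) : ℝ) * ((s:ℝ)+2) = ((i+s+2).choose (s+1) : ℝ) * ((i:ℝ)+1) := by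
    have := Nat.choose_succ_right_eq (i+s+2) (s+1)
    have h2 : i + s + 2 - (s+1) = i + 1 := by omega
    rw [h2] at this
    exact_mod_cast this
  have e3 : ((i+s+2).choose (s+1) : ℝ) = ((i+s+1).choose s : ℝ) + ((i+s+1).choose (s+1) : ℝ) := by
    exact_mod_cast Nat.choose_succ_succ' (i+s+1) s
  have hs1 : ((s:ℝ)+1) ≠ 0 := by positivity
  field_simp
  linear_combination (-((s:ℝ)+2)*((i+s+2).choose (s+2) : ℝ))*e3
    - (((i+s+1).choose s : ℝ))*e2 + (((i+s+2).choose (s+1) : ℝ))*e1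

lemma A_lemma (r : ℕ) : ∀ n : ℕ,
    ∑ i ∈ range (n+1), (-1:ℝ)^i * (n.choose i : ℝ) / ((i+(r+1)).choose (r+1) : ℝ)
      = ((r:ℝ)+1) / ((n:ℝ) + r + 1) := by
  induction r with
  | zero =>
    intro n
    have hpt : ∀ i ∈ range (n+1), (-1:ℝ)^i * (n.choose i : ℝ) / ((i+(0+1)).choose (0+1) : ℝ)
        = (1/((n:ℝ)+1)) * ((-1:ℝ)^i * ((n+1).choose (i+1) : ℝ)) := by
      intro i _
      have h : ((n:ℝ)+1) * (n.choose i : ℝ) = ((n+1).choose (i+1) : ℝ) * ((i:ℝ)+1) := by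
        exact_mod_cast Nat.add_one_mul_choose_eq n i
      have h2 : (i+(0+1)).choose (0+1) = i + 1 := by
        rw [Nat.choose_one_right]
      rw [h2]
      have hi : ((i:ℝ)+1) ≠ 0 := by positivity
      have hn : ((n:ℝ)+1) ≠ 0 := by positivity
      push_cast
      field_simp
      linear_combination h
    rw [Finset.sum_congr rfl hpt, ← Finset.mul_sum]
    have h3 : ∑ i ∈ range (n+1), (-1:ℝ)^i * ((n+1).choose (i+1) : ℝ)
        = ∑ k ∈ Icc 1 (n+1), (-1:ℝ)^(k-1) * ((n+1).choose k : ℝ) := by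
      rw [Icc_to_range (n+1) (fun k => (-1:ℝ)^(k-1) * ((n+1).choose k : ℝ))]
      exact Finset.sum_congr rfl (fun i _ => by simp)
    rw [h3, alt_one]
    norm_num
  | succ s ih =>
    intro n
    have hps := pascal_sum n (fun j => 1/(((j+(s+1)).choose (s+1) : ℕ) : ℝ))
    simp only [mul_one_div] at hps
    have h1 : ∑ j ∈ range (n+2), (-1:ℝ)^j * ((n+1).choose j : ℝ) / (((j+(s+1)).choose (s+1):ℕ):ℝ)
        = ((s:ℝ)+1)/((n:ℝ)+s+2) := by
      have := ih (n+1)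
      push_cast at this
      rw [this]; ring_nf
    have h2 : ∑ i ∈ range (n+1), (-1:ℝ)^i * (n.choose i : ℝ) / (((i+(s+1)).choose (s+1):ℕ):ℝ)
        = ((s:ℝ)+1)/((n:ℝ)+s+1) := by
      have := ih n
      push_cast at this
      rw [this]
    rw [h1, h2] at hps
    -- hps : (s+1)/(n+s+2) = (s+1)/(n+s+1) - Sshift
    have hpt : ∀ i ∈ range (n+1), (-1:ℝ)^i * (n.choose i : ℝ) / ((i+(s+1+1)).choose (s+1+1) : ℝ)
        = (((s:ℝ)+2)/((s:ℝ)+1)) * ((-1:ℝ)^i * (n.choose i : ℝ) / (((i+(s+1)).choose (s+1):ℕ):ℝ)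
            - (-1:ℝ)^i * (n.choose i : ℝ) / ((((i+1)+(s+1)).choose (s+1):ℕ):ℝ)) := by
      intro i _
      have e1 : i + (s+1+1) = i + s + 2 := by omega
      have e2 : s + 1 + 1 = s + 2 := by omega
      have e3 : i + (s+1) = i + s + 1 := by omega
      have e4 : (i+1) + (s+1) = i + s + 2 := by omega
      rw [e1, e2, e3, e4, div_eq_mul_one_div, div_eq_mul_one_div _ (((i+s+1).choose (s+1):ℕ):ℝ),
        div_eq_mul_one_div _ (((i+s+2).choose (s+1):ℕ):ℝ), inv_choose_step i s]
      ring
    rw [Finset.sum_congr rfl hpt, ← Finset.mul_sum, Finset.sum_sub_distrib]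
    have hd2 : ((s:ℝ)+1) ≠ 0 := by positivity
    have hd3 : ((n:ℝ)+s+1) ≠ 0 := by positivity
    have hd4 : ((n:ℝ)+s+2) ≠ 0 := by positivity
    have hsh : ∑ i ∈ range (n+1), (-1:ℝ)^i * (n.choose i : ℝ) / ((((i+1)+(s+1)).choose (s+1):ℕ):ℝ)
        = ((s:ℝ)+1)/((n:ℝ)+s+1) - ((s:ℝ)+1)/((n:ℝ)+s+2) := by
      linarith [hps]
    rw [h2, hsh]
    push_cast
    field_simp
    ring

lemma H_succ (m : ℕ) : H (m+1) = H m + 1/((m:ℝ)+1) := by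
  simp [H, Finset.sum_range_succ]

lemma pascal_sum_Icc (n : ℕ) (δ : ℕ → ℝ) :
    ∑ k ∈ Icc 1 (n+1), (-1:ℝ)^(k-1) * ((n+1).choose k : ℝ) * δ k
      = ∑ k ∈ Icc 1 n, (-1:ℝ)^(k-1) * (n.choose k : ℝ) * δ k
        + ∑ k ∈ Icc 1 (n+1), (-1:ℝ)^(k-1) * (n.choose (k-1) : ℝ) * δ k := by
  have hs : ∀ k ∈ Icc 1 (n+1), (-1:ℝ)^(k-1) * ((n+1).choose k : ℝ) * δ k
      = (-1:ℝ)^(k-1) * (n.choose k : ℝ) * δ k + (-1:ℝ)^(k-1) * (n.choose (k-1) : ℝ) * δ k := by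
    intro k hk
    simp only [mem_Icc] at hk
    obtain ⟨j, rfl⟩ : ∃ j, k = j + 1 := ⟨k-1, by omega⟩
    rw [Nat.choose_succ_succ' n j]
    push_cast
    ring
  rw [Finset.sum_congr rfl hs, Finset.sum_add_distrib]
  congr 1
  rw [Finset.sum_Icc_succ_top (show 1 ≤ n+1 by omega)]
  simp

lemma inv_ichoose_step (i r : ℕ) (hi : 1 ≤ i) :
    (1:ℝ)/((i:ℝ) * ((i+r).choose r : ℝ)) - 1/((i:ℝ) * ((i+(r+1)).choose (r+1) : ℝ))
      = 1/(((r:ℝ)+1) * ((i+(r+1)).choose (r+1) : ℝ)) := by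
  have e0 : i + (r+1) = i + r + 1 := by omega
  rw [e0]
  have ha : (0:ℝ) < ((i+r).choose r : ℝ) := choose_pos_real _ _ (by omega)
  have hc : (0:ℝ) < ((i+r+1).choose (r+1) : ℝ) := choose_pos_real _ _ (by omega)
  have hi' : (0:ℝ) < (i:ℝ) := by exact_mod_cast hi
  have e3 : ((i+r+1).choose (r+1) : ℝ) = ((i+r).choose r : ℝ) + ((i+r).choose (r+1) : ℝ) := by
    exact_mod_cast Nat.choose_succ_succ' (i+r) r
  have e1 : ((i+r).choose (r+1) : ℝ) * ((r:ℝ)+1) = ((i+r).choose r : ℝ) * (i:ℝ) := by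
    have := Nat.choose_succ_right_eq (i+r) r
    have h2 : i + r - r = i := by omega
    rw [h2] at this; exact_mod_cast this
  have hr1 : ((r:ℝ)+1) ≠ 0 := by positivity
  rw [div_sub_div _ _ (mul_pos hi' ha).ne' (mul_pos hi' hc).ne',
    div_eq_div_iff (mul_pos (mul_pos hi' ha) (mul_pos hi' hc)).ne' (mul_pos (by positivity) hc).ne']
  linear_combination ((i:ℝ)*((i+r+1).choose (r+1) : ℝ)*((r:ℝ)+1))*e3 + ((i:ℝ)*((i+r+1).choose (r+1) : ℝ))*e1

lemma L_lemma (r : ℕ) : ∀ n : ℕ,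
    ∑ i ∈ Icc 1 n, (-1:ℝ)^(i-1) * (n.choose i : ℝ) / ((i:ℝ) * ((i+r).choose r : ℝ))
      = H (n+r) - H r := by
  induction r with
  | zero =>
    intro n
    induction n with
    | zero => simp [H]
    | succ n ihn =>
      simp only [Nat.add_zero, Nat.choose_zero_right, Nat.cast_one, mul_one] at ihn ⊢
      have hconv : ∀ k ∈ Icc 1 (n+1), (-1:ℝ)^(k-1) * ((n+1).choose k : ℝ) / (k:ℝ)
          = (-1:ℝ)^(k-1) * ((n+1).choose k : ℝ) * (1/(k:ℝ)) := by
        intro k _; rw [mul_one_div]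
      rw [Finset.sum_congr rfl hconv, pascal_sum_Icc n (fun k => 1/(k:ℝ))]
      have h1 : ∑ k ∈ Icc 1 n, (-1:ℝ)^(k-1) * (n.choose k : ℝ) * (1/(k:ℝ)) = H n - H 0 := by
        rw [← ihn]
        exact Finset.sum_congr rfl (fun k _ => by rw [mul_one_div])
      have h2 : ∑ k ∈ Icc 1 (n+1), (-1:ℝ)^(k-1) * (n.choose (k-1) : ℝ) * (1/(k:ℝ))
          = (1/((n:ℝ)+1)) * ∑ k ∈ Icc 1 (n+1), (-1:ℝ)^(k-1) * ((n+1).choose k : ℝ) := by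
        rw [Finset.mul_sum]
        apply Finset.sum_congr rfl
        intro k hk
        simp only [mem_Icc] at hk
        obtain ⟨j, rfl⟩ : ∃ j, k = j + 1 := ⟨k-1, by omega⟩
        simp only [Nat.add_sub_cancel]
        have h : ((n:ℝ)+1) * (n.choose j : ℝ) = ((n+1).choose (j+1) : ℝ) * ((j:ℝ)+1) := by
          exact_mod_cast Nat.add_one_mul_choose_eq n j
        have hj : ((j:ℝ)+1) ≠ 0 := by positivity
        have hn : ((n:ℝ)+1) ≠ 0 := by positivity
        push_cast
        field_simp
        linear_combination h
      rw [h1, h2, alt_one]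
      rw [H_succ n]
      simp [H]
  | succ r ihr =>
    intro n
    have hA := A_lemma r n
    rw [Finset.sum_range_succ'
      (fun i => (-1:ℝ)^i * (n.choose i : ℝ) / ((i+(r+1)).choose (r+1) : ℝ)) n] at hA
    simp only [pow_zero, Nat.choose_zero_right, Nat.cast_one, Nat.zero_add, Nat.choose_self,
      one_mul, div_one] at hA
    have hS1 : ∑ i ∈ Icc 1 n, (-1:ℝ)^(i-1) * (n.choose i : ℝ) / ((i+(r+1)).choose (r+1) : ℝ)
        = 1 - ((r:ℝ)+1)/((n:ℝ)+r+1) := by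
      rw [Icc_to_range n (fun k => (-1:ℝ)^(k-1) * (n.choose k : ℝ) / ((k+(r+1)).choose (r+1) : ℝ))]
      have hneg : ∀ i ∈ range n,
          (-1:ℝ)^(i+1-1) * (n.choose (i+1):ℝ) / (((i+1)+(r+1)).choose (r+1):ℝ)
          = -((-1:ℝ)^(i+1) * (n.choose (i+1):ℝ) / (((i+1)+(r+1)).choose (r+1):ℝ)) := by
        intro i _
        simp only [Nat.add_sub_cancel, pow_succ]
        ring
      rw [Finset.sum_congr rfl hneg, Finset.sum_neg_distrib]
      have : ((r:ℝ)+1)/((n:ℝ)+(r:ℝ)+1) = ((r:ℝ)+1)/((n:ℝ)+r+1) := by norm_num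
      linarith [hA]
    have hpt : ∀ i ∈ Icc 1 n,
        (-1:ℝ)^(i-1) * (n.choose i:ℝ) / ((i:ℝ) * ((i+(r+1)).choose (r+1):ℝ))
        = (-1:ℝ)^(i-1) * (n.choose i:ℝ) / ((i:ℝ) * ((i+r).choose r:ℝ))
          - (1/((r:ℝ)+1)) * ((-1:ℝ)^(i-1) * (n.choose i:ℝ) / (((i+(r+1)).choose (r+1):ℝ))) := by
      intro i hi
      simp only [mem_Icc] at hi
      have hstep := inv_ichoose_step i r hi.1
      have hB : (1:ℝ)/((i:ℝ) * ((i+(r+1)).choose (r+1):ℝ))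
          = 1/((i:ℝ) * ((i+r).choose r:ℝ)) - 1/(((r:ℝ)+1) * ((i+(r+1)).choose (r+1):ℝ)) := by
        linarith [hstep]
      simp only [← one_div_mul_one_div] at hB
      rw [div_eq_mul_one_div ((-1:ℝ)^(i-1) * (n.choose i:ℝ)) ((i:ℝ) * ((i+(r+1)).choose (r+1):ℝ)),
        div_eq_mul_one_div ((-1:ℝ)^(i-1) * (n.choose i:ℝ)) ((i:ℝ) * ((i+r).choose r:ℝ)),
        div_eq_mul_one_div ((-1:ℝ)^(i-1) * (n.choose i:ℝ)) (((i+(r+1)).choose (r+1):ℝ))]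
      simp only [← one_div_mul_one_div]
      linear_combination ((-1:ℝ)^(i-1) * (n.choose i:ℝ)) * hB
    rw [Finset.sum_congr rfl hpt, Finset.sum_sub_distrib, ihr n, ← Finset.mul_sum, hS1]
    have h5 : n + (r+1) = (n+r) + 1 := by omega
    rw [h5, H_succ (n+r), H_succ r]
    have hd1 : ((r:ℝ)+1) ≠ 0 := by positivity
    have hd2 : ((n:ℝ)+r+1) ≠ 0 := by positivity
    push_cast
    field_simp
    ring

lemma fact_ne (x : ℕ) : ((Nat.factorial x : ℕ) : ℝ) ≠ 0 := by
  exact_mod_cast (Nat.factorial_ne_zero x)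

lemma ratio_choose (n r k : ℕ) (hk : k ≤ n) :
    (n.choose k : ℝ) / ((k+r).choose r : ℝ)
      = ((n+r).choose (k+r) : ℝ) / ((n+r).choose r : ℝ) := by
  have f1 : (n.choose k : ℝ) = (Nat.factorial n : ℝ)/((Nat.factorial k : ℝ) * (Nat.factorial (n-k) : ℝ)) :=
    Nat.cast_choose ℝ hk
  have f2 : ((k+r).choose r : ℝ) = (Nat.factorial (k+r) : ℝ)/((Nat.factorial r : ℝ) * (Nat.factorial k : ℝ)) := by
    have := Nat.cast_choose (K := ℝ) (show r ≤ k+r by omega)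
    rwa [show k+r-r = k by omega] at this
  have f3 : ((n+r).choose (k+r) : ℝ) = (Nat.factorial (n+r) : ℝ)/((Nat.factorial (k+r) : ℝ) * (Nat.factorial (n-k) : ℝ)) := by
    have := Nat.cast_choose (K := ℝ) (show k+r ≤ n+r by omega)
    rwa [show n+r-(k+r) = n-k by omega] at this
  have f4 : ((n+r).choose r : ℝ) = (Nat.factorial (n+r) : ℝ)/((Nat.factorial r : ℝ) * (Nat.factorial n : ℝ)) := by
    have := Nat.cast_choose (K := ℝ) (show r ≤ n+r by omega)
    rwa [show n+r-r = n by omega] at this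
  rw [f1, f2, f3, f4]
  have := fact_ne n; have := fact_ne k; have := fact_ne (n-k); have := fact_ne r
  have := fact_ne (k+r); have := fact_ne (n+r)
  field_simp

theorem stmt_6 (n : ℕ) (r : ℕ) (hr : 1 ≤ r) :
    ∑ k ∈ Icc 1 n, (-1 : ℝ) ^ (k - 1) * ((Nat.choose n k : ℝ) / (Nat.choose (k + r) r : ℝ)) * H k =
      ((r : ℝ) / ((n : ℝ) + r)) * (H (n + r) - H r) + (n : ℝ) / ((n : ℝ) + r) ^ 2 := by
  obtain ⟨M, hM⟩ : ∃ M, n + r = M + 1 := ⟨n + r - 1, by omega⟩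
  have hCr : (0:ℝ) < ((n+r).choose r : ℝ) := choose_pos_real _ _ (by omega)
  have hCM : ((n+r).choose r : ℝ) = ((M+1).choose r : ℝ) := by rw [hM]
  have hMzero : (M.choose (n+r) : ℝ) = 0 := by
    rw [Nat.choose_eq_zero_of_lt (by omega)]; simp
  -- Step 1: rewrite summand and expand H k
  have step1 : ∀ k ∈ Icc 1 n,
      (-1 : ℝ) ^ (k - 1) * ((n.choose k : ℝ) / ((k + r).choose r : ℝ)) * H k
      = ∑ i ∈ Icc 1 k,
          (1/((n+r).choose r : ℝ)) * ((-1:ℝ)^(k-1) * ((n+r).choose (k+r) : ℝ) * (1/(i:ℝ))) := by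
    intro k hk
    simp only [mem_Icc] at hk
    rw [ratio_choose n r k hk.2, H_Icc, Finset.mul_sum]
    exact Finset.sum_congr rfl (fun i _ => by ring)
  rw [Finset.sum_congr rfl step1]
  -- Step 2: swap order of summation
  rw [show (∑ k ∈ Icc 1 n, ∑ i ∈ Icc 1 k,
        (1/((n+r).choose r : ℝ)) * ((-1:ℝ)^(k-1) * ((n+r).choose (k+r) : ℝ) * (1/(i:ℝ))))
      = ∑ i ∈ Icc 1 n, ∑ k ∈ Icc i n,
        (1/((n+r).choose r : ℝ)) * ((-1:ℝ)^(k-1) * ((n+r).choose (k+r) : ℝ) * (1/(i:ℝ))) from by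
    simp only [← Finset.Ico_add_one_right_eq_Icc]
    exact (Finset.sum_Ico_Ico_comm 1 (n+1)
      (fun i k => (1/((n+r).choose r : ℝ)) * ((-1:ℝ)^(k-1) * ((n+r).choose (k+r) : ℝ) * (1/(i:ℝ))))).symm]
  -- Step 3: compute inner tail sums
  have tailsum : ∀ j : ℕ, j ≤ n →
      ∑ k ∈ Icc (j+1) n, (-1:ℝ)^(k-1) * ((n+r).choose (k+r) : ℝ)
        = (-1:ℝ)^j * (M.choose (j+r) : ℝ) := by
    intro j hj
    have hsplit : ∑ k ∈ Ico 1 (j+1), (-1:ℝ)^(k-1) * ((n+r).choose (k+r) : ℝ)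
        + ∑ k ∈ Ico (j+1) (n+1), (-1:ℝ)^(k-1) * ((n+r).choose (k+r) : ℝ)
        = ∑ k ∈ Ico 1 (n+1), (-1:ℝ)^(k-1) * ((n+r).choose (k+r) : ℝ) :=
      Finset.sum_Ico_consecutive _ (by omega) (by omega)
    simp only [Finset.Ico_add_one_right_eq_Icc] at hsplit
    have hpn : ∑ k ∈ Icc 1 n, (-1:ℝ)^(k-1) * ((n+r).choose (k+r) : ℝ) = (M.choose r : ℝ) := by
      simp only [hM]
      rw [prefixAlt M r n]
      rw [show M.choose (n+r) = 0 from Nat.choose_eq_zero_of_lt (by omega)]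
      simp
    have hpj : ∑ k ∈ Icc 1 j, (-1:ℝ)^(k-1) * ((n+r).choose (k+r) : ℝ)
        = (M.choose r : ℝ) - (-1:ℝ)^j * (M.choose (j+r) : ℝ) := by
      simp only [hM]
      exact prefixAlt M r j
    rw [hpn, hpj] at hsplit
    linarith [hsplit]
  have step3 : ∀ i ∈ Icc 1 n,
      ∑ k ∈ Icc i n, (1/((n+r).choose r : ℝ)) * ((-1:ℝ)^(k-1) * ((n+r).choose (k+r) : ℝ) * (1/(i:ℝ)))
      = (1/((n+r).choose r : ℝ)) * (1/((M:ℝ)+1)) * ((-1:ℝ)^(i-1) * (((M+1)).choose (i+r) : ℝ))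
        + ((r:ℝ)/(((M:ℝ)+1) * ((n+r).choose r : ℝ)))
            * ((-1:ℝ)^(i-1) * (((M+1)).choose (i+r) : ℝ) * (1/(i:ℝ))) := by
    intro i hi
    simp only [mem_Icc] at hi
    obtain ⟨j, rfl⟩ : ∃ j, i = j + 1 := ⟨i-1, by omega⟩
    have hc : ∑ k ∈ Icc (j+1) n,
        (1/((n+r).choose r : ℝ)) * ((-1:ℝ)^(k-1) * ((n+r).choose (k+r) : ℝ) * (1/((j+1:ℕ):ℝ)))
        = (1/((n+r).choose r : ℝ)) * (1/((j+1:ℕ):ℝ))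
          * ∑ k ∈ Icc (j+1) n, (-1:ℝ)^(k-1) * ((n+r).choose (k+r) : ℝ) := by
      rw [Finset.mul_sum]
      exact Finset.sum_congr rfl (fun k _ => by ring)
    rw [hc, tailsum j (by omega)]
    have hsucc : ((M:ℝ)+1) * (M.choose (j+r) : ℝ) = ((M+1).choose (j+r+1) : ℝ) * ((j:ℝ)+(r:ℝ)+1) := by
      have := Nat.add_one_mul_choose_eq M (j+r)
      exact_mod_cast this
    have hidx : (j+1) + r = j + r + 1 := by omega
    have hj1 : ((j:ℝ)+1) ≠ 0 := by positivity
    have hM1 : ((M:ℝ)+1) ≠ 0 := by positivity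
    have hD : (M.choose (j+r) : ℝ) = ((M+1).choose (j+r+1) : ℝ) * ((j:ℝ)+(r:ℝ)+1) / ((M:ℝ)+1) := by
      rw [eq_div_iff hM1]; linear_combination hsucc
    simp only [hidx, Nat.add_sub_cancel]
    rw [hD]
    have hCr' : ((n+r).choose r : ℝ) ≠ 0 := ne_of_gt hCr
    push_cast
    field_simp
    ring
  rw [Finset.sum_congr rfl step3, Finset.sum_add_distrib, ← Finset.mul_sum, ← Finset.mul_sum]
  -- S1 : first sum
  have hS1 : ∑ i ∈ Icc 1 n, (-1:ℝ)^(i-1) * (((M+1)).choose (i+r) : ℝ) = (M.choose r : ℝ) := by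
    rw [prefixAlt M r n, show M.choose (n+r) = 0 from Nat.choose_eq_zero_of_lt (by omega)]
    simp
  -- S2 : second sum
  have hS2 : ∑ i ∈ Icc 1 n, (-1:ℝ)^(i-1) * (((M+1)).choose (i+r) : ℝ) * (1/(i:ℝ))
      = ((n+r).choose r : ℝ) * (H (n+r) - H r) := by
    rw [← L_lemma r n, Finset.mul_sum]
    apply Finset.sum_congr rfl
    intro i hi
    simp only [mem_Icc] at hi
    have hrc := ratio_choose n r i hi.2
    have hpos : ((i+r).choose r : ℝ) ≠ 0 := ne_of_gt (choose_pos_real _ _ (by omega))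
    have hi0 : ((i:ℝ)) ≠ 0 := by
      have : (0:ℝ) < (i:ℝ) := by exact_mod_cast hi.1
      linarith
    have hCr' : ((n+r).choose r : ℝ) ≠ 0 := ne_of_gt hCr
    have hCiv : ((M+1).choose (i+r) : ℝ) = ((n+r).choose r : ℝ) * ((n.choose i : ℝ) / ((i+r).choose r : ℝ)) := by
      rw [← hM, hrc]
      field_simp
    rw [hCiv]
    field_simp
  rw [hS1, hS2]
  -- final algebra
  have hfin : (M.choose r : ℝ) * ((M:ℝ)+1) = ((M+1).choose r : ℝ) * (n:ℝ) := by
    have := Nat.choose_mul_succ_eq M r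
    have h2 : M + 1 - r = n := by omega
    rw [h2] at this
    exact_mod_cast this
  have hMn : ((M:ℝ)+1) = (n:ℝ) + (r:ℝ) := by exact_mod_cast hM.symm
  have hM1 : ((M:ℝ)+1) ≠ 0 := by positivity
  rw [← hCM] at hfin
  have hCMr : (M.choose r : ℝ) = ((n+r).choose r : ℝ) * (n:ℝ) / ((M:ℝ)+1) := by
    rw [eq_div_iff hM1]; linear_combination hfin
  rw [hCMr, ← hMn]
  have hCr' : ((n+r).choose r : ℝ) ≠ 0 := ne_of_gt hCr
  field_simp
  ring
end

section
/- For every natural number n and every natural number r ≥ 1, ∑_{k=0}^{n} (−1)^{k+1} · (C(n,k)/C(k+r, r)) · H_k^{(2)} = (r/(n+r)) · ( H_n · (H_{n−1+r} − H_{r−1}) − ∑_{k=0}^{n−1} H_k/(k+r) ), as an identity of real numbers. -/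
open Finset

noncomputable def H2 : ℕ → ℝ := fun m => ∑ j ∈ range m, (1 : ℝ) / ((j : ℝ) + 1) ^ 2

lemma ch_ne (k r : ℕ) : (((k + r).choose r : ℕ) : ℝ) ≠ 0 := by
  exact_mod_cast (Nat.choose_pos (Nat.le_add_left r k)).ne'

lemma e1 (k r : ℕ) : (((k + r).choose r : ℕ) : ℝ) * ((k : ℝ) + r + 1)
    = (((k + r + 1).choose (r + 1) : ℕ) : ℝ) * ((r : ℝ) + 1) := by
  have h := Nat.add_one_mul_choose_eq (k + r) r
  have h' : (k + r + 1) * (k + r).choose r = (k + r + 1).choose (r + 1) * (r + 1) := by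
    simpa [Nat.succ_eq_add_one] using h
  have := congrArg (Nat.cast : ℕ → ℝ) h'
  push_cast at this
  linarith [this]

lemma e2 (k r : ℕ) : (((k + 1 + r).choose r : ℕ) : ℝ) * ((k : ℝ) + 1)
    = (((k + r).choose r : ℕ) : ℝ) * ((k : ℝ) + r + 1) := by
  have h := Nat.add_one_mul_choose_eq (k + r) k
  have h1 : (k + r).choose k = (k + r).choose r := Nat.choose_symm_add
  have h2 : (k + r + 1).choose (k + 1) = (k + 1 + r).choose r := by
    rw [show k + r + 1 = (k + 1) + r by omega]; exact Nat.choose_symm_add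
  have h' : (k + r + 1) * (k + r).choose r = (k + 1 + r).choose r * (k + 1) := by
    rw [← h1, ← h2]; simpa [Nat.succ_eq_add_one] using h
  have := congrArg (Nat.cast : ℕ → ℝ) h'
  push_cast at this
  linarith [this]

lemma Hsucc (m : ℕ) : H (m + 1) = H m + 1 / ((m : ℝ) + 1) := by
  simp [H, Finset.sum_range_succ]

lemma H2succ (m : ℕ) : H2 (m + 1) = H2 m + 1 / ((m : ℝ) + 1) ^ 2 := by
  simp [H2, Finset.sum_range_succ]

lemma pascal (g : ℕ → ℝ) (n : ℕ) :
    ∑ k ∈ range (n + 2), (-1 : ℝ) ^ k * ((n + 1).choose k : ℕ) * g k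
      = ∑ k ∈ range (n + 1), (-1 : ℝ) ^ k * (n.choose k : ℕ) * (g k - g (k + 1)) := by
  have expand : ∀ k, (-1 : ℝ) ^ k * (n.choose k : ℕ) * (g k - g (k + 1))
      = (-1 : ℝ) ^ k * (n.choose k : ℕ) * g k - (-1 : ℝ) ^ k * (n.choose k : ℕ) * g (k + 1) := by
    intro k; ring
  rw [Finset.sum_congr rfl fun k _ => expand k, Finset.sum_sub_distrib]
  rw [Finset.sum_range_succ' (fun k => (-1 : ℝ) ^ k * ((n + 1).choose k : ℕ) * g k) (n + 1)]
  rw [Finset.sum_range_succ' (fun k => (-1 : ℝ) ^ k * (n.choose k : ℕ) * g k) n]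
  have key : ∀ i, (-1 : ℝ) ^ (i + 1) * ((n + 1).choose (i + 1) : ℕ) * g (i + 1)
      = (-1 : ℝ) ^ (i + 1) * (n.choose (i + 1) : ℕ) * g (i + 1)
        - (-1 : ℝ) ^ i * (n.choose i : ℕ) * g (i + 1) := by
    intro i
    have : ((n + 1).choose (i + 1) : ℝ) = (n.choose i : ℕ) + (n.choose (i + 1) : ℕ) := by
      rw [Nat.choose_succ_succ]; push_cast; ring
    rw [this]; ring
  rw [Finset.sum_congr rfl fun i _ => key i, Finset.sum_sub_distrib]
  have last : ∑ i ∈ range (n + 1), (-1 : ℝ) ^ (i + 1) * (n.choose (i + 1) : ℕ) * g (i + 1)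
      = ∑ i ∈ range n, (-1 : ℝ) ^ (i + 1) * (n.choose (i + 1) : ℕ) * g (i + 1) := by
    rw [Finset.sum_range_succ]; simp
  rw [last]
  simp
  ring

lemma keyA (k s : ℕ) (C1 C2 C3 : ℝ) (n1 : C1 ≠ 0) (n2 : C3 ≠ 0) (n3 : C2 ≠ 0)
    (hb : C3 * ((k : ℝ) + 1) = C1 * ((k : ℝ) + s + 2))
    (ha : C1 * ((k : ℝ) + s + 2) = C2 * ((s : ℝ) + 2)) :
    1 / C1 - 1 / C3 = ((s : ℝ) + 1) / ((s : ℝ) + 2) * (1 / C2) := by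
  have hk1 : ((k : ℝ) + 1) ≠ 0 := by positivity
  have hs : ((s : ℝ) + 2) ≠ 0 := by positivity
  have v3 : C3 = C1 * ((k : ℝ) + (s : ℝ) + 2) / ((k : ℝ) + 1) := by
    rw [eq_div_iff hk1]; linarith [hb]
  have v2 : C2 = C1 * ((k : ℝ) + (s : ℝ) + 2) / ((s : ℝ) + 2) := by
    rw [eq_div_iff hs]; linarith [ha]
  rw [v3, v2]
  field_simp
  ring

lemma keyB (k s : ℕ) (C1 C2 C3 : ℝ) (n1 : C1 ≠ 0) (n2 : C3 ≠ 0) (n3 : C2 ≠ 0)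
    (hb : C3 * ((k : ℝ) + 1) = C1 * ((k : ℝ) + s + 2))
    (ha : C1 * ((k : ℝ) + s + 2) = C2 * ((s : ℝ) + 2)) :
    1 / ((k : ℝ) + 1) ^ 2 * (1 / C3)
      = 1 / ((s : ℝ) + 1) * (1 / (((k : ℝ) + 1) * C1))
        - 1 / (((s : ℝ) + 1) * ((s : ℝ) + 2)) * (1 / C2) := by
  have hk1 : ((k : ℝ) + 1) ≠ 0 := by positivity
  have hs : ((s : ℝ) + 2) ≠ 0 := by positivity
  have hs1 : ((s : ℝ) + 1) ≠ 0 := by positivity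
  have v3 : C3 = C1 * ((k : ℝ) + (s : ℝ) + 2) / ((k : ℝ) + 1) := by
    rw [eq_div_iff hk1]; linarith [hb]
  have v2 : C2 = C1 * ((k : ℝ) + (s : ℝ) + 2) / ((s : ℝ) + 2) := by
    rw [eq_div_iff hs]; linarith [ha]
  rw [v3, v2]
  have hks : ((k : ℝ) + (s : ℝ) + 2) ≠ 0 := by positivity
  field_simp
  ring

-- instantiated versions of the two binomial relations
lemma ib (k s : ℕ) : (((k + 1 + s + 1).choose (s + 1) : ℕ) : ℝ) * ((k : ℝ) + 1)
    = (((k + s + 1).choose (s + 1) : ℕ) : ℝ) * ((k : ℝ) + s + 2) := by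
  have h := e2 k (s + 1)
  rw [show k + 1 + (s + 1) = k + 1 + s + 1 by omega, show k + (s + 1) = k + s + 1 by omega] at h
  push_cast at h ⊢
  linarith [h]

lemma ia (k s : ℕ) : (((k + s + 1).choose (s + 1) : ℕ) : ℝ) * ((k : ℝ) + s + 2)
    = (((k + s + 2).choose (s + 2) : ℕ) : ℝ) * ((s : ℝ) + 2) := by
  have h := e1 k (s + 1)
  rw [show k + (s + 1) = k + s + 1 by omega, show k + s + 1 + 1 = k + s + 2 by omega,
    show s + 1 + 1 = s + 2 by omega] at h
  push_cast at h ⊢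
  linarith [h]

lemma n1' (k s : ℕ) : (((k + s + 1).choose (s + 1) : ℕ) : ℝ) ≠ 0 := by
  have := ch_ne k (s + 1); rwa [show k + (s + 1) = k + s + 1 by omega] at this

lemma n3' (k s : ℕ) : (((k + 1 + s + 1).choose (s + 1) : ℕ) : ℝ) ≠ 0 := by
  have := ch_ne (k + 1) (s + 1); rwa [show k + 1 + (s + 1) = k + 1 + s + 1 by omega] at this

lemma n2' (k s : ℕ) : (((k + s + 2).choose (s + 2) : ℕ) : ℝ) ≠ 0 := by
  have := ch_ne k (s + 2); rwa [show k + (s + 2) = k + s + 2 by omega] at this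

lemma SA : ∀ n s : ℕ, ∑ k ∈ range (n + 1),
    (-1 : ℝ) ^ k * (n.choose k : ℕ) * (1 / (((k + s + 1).choose (s + 1) : ℕ) : ℝ))
    = ((s : ℝ) + 1) / ((n : ℝ) + s + 1) := by
  intro n
  induction n with
  | zero =>
    intro s
    have hs : ((s : ℝ) + 1) ≠ 0 := by positivity
    simp [div_self hs]
  | succ n ih =>
    intro s
    rw [show n + 1 + 1 = n + 2 from rfl,
      pascal (fun k => 1 / ((((k + s + 1).choose (s + 1) : ℕ)) : ℝ)) n]
    have point : ∀ k ∈ range (n + 1), (-1 : ℝ) ^ k * (n.choose k : ℕ) *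
        ((1 : ℝ) / (((k + s + 1).choose (s + 1) : ℕ) : ℝ)
          - 1 / (((k + 1 + s + 1).choose (s + 1) : ℕ) : ℝ))
        = (((s : ℝ) + 1) / ((s : ℝ) + 2)) *
          ((-1 : ℝ) ^ k * (n.choose k : ℕ) *
            (1 / (((k + (s + 1) + 1).choose (s + 1 + 1) : ℕ) : ℝ))) := by
      intro k _
      rw [show k + (s + 1) + 1 = k + s + 2 by omega, show s + 1 + 1 = s + 2 by omega]
      rw [keyA k s _ _ _ (n1' k s) (n3' k s) (n2' k s) (ib k s) (ia k s)]
      ring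
    rw [Finset.sum_congr rfl point, ← Finset.mul_sum, ih (s + 1)]
    have d1 : ((s : ℝ) + 2) ≠ 0 := by positivity
    have d2 : ((n : ℝ) + (s : ℝ) + 2) ≠ 0 := by positivity
    push_cast
    rw [div_mul_div_comm]
    rw [div_eq_div_iff (by positivity) (by positivity)]
    ring

lemma V (s : ℕ) : ∀ m : ℕ, ∑ k ∈ range m,
    (-1 : ℝ) ^ k * (m.choose (k + 1) : ℕ) * (1 / (((k + s + 1).choose (s + 1) : ℕ) : ℝ))
    = ((s : ℝ) + 1) * (H (m + s) - H s) := by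
  intro m
  induction m with
  | zero => simp
  | succ m ih =>
    have split : ∀ k ∈ range (m + 1), (-1 : ℝ) ^ k * ((m + 1).choose (k + 1) : ℕ) *
        (1 / (((k + s + 1).choose (s + 1) : ℕ) : ℝ))
        = (-1 : ℝ) ^ k * (m.choose k : ℕ) * (1 / (((k + s + 1).choose (s + 1) : ℕ) : ℝ))
          + (-1 : ℝ) ^ k * (m.choose (k + 1) : ℕ) * (1 / (((k + s + 1).choose (s + 1) : ℕ) : ℝ)) := by
      intro k _
      have : ((m + 1).choose (k + 1) : ℝ) = (m.choose k : ℕ) + (m.choose (k + 1) : ℕ) := by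
        rw [Nat.choose_succ_succ]; push_cast; ring
      rw [this]; ring
    rw [Finset.sum_congr rfl split, Finset.sum_add_distrib, SA m s]
    have drop : ∑ k ∈ range (m + 1),
        (-1 : ℝ) ^ k * (m.choose (k + 1) : ℕ) * (1 / (((k + s + 1).choose (s + 1) : ℕ) : ℝ))
        = ∑ k ∈ range m,
          (-1 : ℝ) ^ k * (m.choose (k + 1) : ℕ) * (1 / (((k + s + 1).choose (s + 1) : ℕ) : ℝ)) := by
      rw [Finset.sum_range_succ]; simp
    rw [drop, ih]
    have hH : H (m + 1 + s) = H (m + s) + 1 / ((m : ℝ) + (s : ℝ) + 1) := by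
      rw [show m + 1 + s = (m + s) + 1 by omega, Hsucc]
      push_cast; ring_nf
    rw [hH]
    have : ((m : ℝ) + s + 1) ≠ 0 := by positivity
    field_simp
    ring

lemma U (n s : ℕ) : ∑ k ∈ range (n + 1),
    (-1 : ℝ) ^ k * (n.choose k : ℕ) *
      (1 / (((k : ℝ) + 1) * (((k + s + 1).choose (s + 1) : ℕ) : ℝ)))
    = (((s : ℝ) + 1) / ((n : ℝ) + 1)) * (H (n + s + 1) - H s) := by
  have hn1 : ((n : ℝ) + 1) ≠ 0 := by positivity
  have key : ∀ k ∈ range (n + 1), (-1 : ℝ) ^ k * (n.choose k : ℕ) *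
      (1 / (((k : ℝ) + 1) * (((k + s + 1).choose (s + 1) : ℕ) : ℝ)))
      = (1 / ((n : ℝ) + 1)) * ((-1 : ℝ) ^ k * ((n + 1).choose (k + 1) : ℕ) *
          (1 / (((k + s + 1).choose (s + 1) : ℕ) : ℝ))) := by
    intro k _
    have h := Nat.add_one_mul_choose_eq n k
    have h' : (n + 1) * n.choose k = (n + 1).choose (k + 1) * (k + 1) := by
      simpa [Nat.succ_eq_add_one] using h
    have hc := congrArg (Nat.cast : ℕ → ℝ) h'
    push_cast at hc
    have hk1 : ((k : ℝ) + 1) ≠ 0 := by positivity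
    have hcne := n1' k s
    field_simp
    linear_combination hc
  rw [Finset.sum_congr rfl key, ← Finset.mul_sum]
  have hv := V s (n + 1)
  rw [show n + 1 + s = n + s + 1 by omega] at hv
  rw [hv]
  field_simp

lemma L2 : ∀ n s : ℕ, ∑ k ∈ range (n + 1), H k / ((k : ℝ) + s + 1)
    = (∑ k ∈ range n, H k / ((k : ℝ) + s + 2))
      + 1 / ((s : ℝ) + 1) * (H n - H (n + s + 1) + H (s + 1)) := by
  intro n
  induction n with
  | zero => intro s; simp [H]
  | succ n ih =>
    intro s
    rw [Finset.sum_range_succ, ih s, Finset.sum_range_succ,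
      show n + 1 + s + 1 = n + s + 1 + 1 by omega, Hsucc (n + s + 1), Hsucc n]
    have h1 : ((s : ℝ) + 1) ≠ 0 := by positivity
    have h2 : ((n : ℝ) + 1) ≠ 0 := by positivity
    have h3 : ((n : ℝ) + s + 2) ≠ 0 := by positivity
    have h4 : ((n : ℝ) + 1 + s + 1) = (n : ℝ) + s + 2 := by ring
    push_cast
    field_simp
    ring

lemma main : ∀ n s : ℕ, ∑ k ∈ range (n + 1),
    (-1 : ℝ) ^ k * (n.choose k : ℕ) * (1 / (((k + s + 1).choose (s + 1) : ℕ) : ℝ) * H2 k)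
    = -(((s : ℝ) + 1) / ((n : ℝ) + (s : ℝ) + 1)) *
        (H n * (H (n + s) - H s) - ∑ k ∈ range n, H k / ((k : ℝ) + (s : ℝ) + 1)) := by
  intro n
  induction n with
  | zero => intro s; simp [H, H2]
  | succ n ih =>
    intro s
    rw [show n + 1 + 1 = n + 2 from rfl,
      pascal (fun k => 1 / ((((k + s + 1).choose (s + 1) : ℕ)) : ℝ) * H2 k) n]
    have point : ∀ k ∈ range (n + 1), (-1 : ℝ) ^ k * (n.choose k : ℕ) *
        ((1 / (((k + s + 1).choose (s + 1) : ℕ) : ℝ) * H2 k)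
          - (1 / (((k + 1 + s + 1).choose (s + 1) : ℕ) : ℝ) * H2 (k + 1)))
        = (((s : ℝ) + 1) / ((s : ℝ) + 2)) *
            ((-1 : ℝ) ^ k * (n.choose k : ℕ) *
              (1 / (((k + s + 2).choose (s + 2) : ℕ) : ℝ) * H2 k))
          + (-(1 / ((s : ℝ) + 1))) *
            ((-1 : ℝ) ^ k * (n.choose k : ℕ) *
              (1 / (((k : ℝ) + 1) * (((k + s + 1).choose (s + 1) : ℕ) : ℝ))))
          + (1 / (((s : ℝ) + 1) * ((s : ℝ) + 2))) *
            ((-1 : ℝ) ^ k * (n.choose k : ℕ) *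
              (1 / (((k + s + 2).choose (s + 2) : ℕ) : ℝ))) := by
      intro k _
      have kA := keyA k s _ _ _ (n1' k s) (n3' k s) (n2' k s) (ib k s) (ia k s)
      have kB := keyB k s _ _ _ (n1' k s) (n3' k s) (n2' k s) (ib k s) (ia k s)
      rw [H2succ k]
      linear_combination ((-1 : ℝ) ^ k * (n.choose k : ℕ) * H2 k) * kA
        - ((-1 : ℝ) ^ k * (n.choose k : ℕ)) * kB
    rw [Finset.sum_congr rfl point, Finset.sum_add_distrib, Finset.sum_add_distrib,
      ← Finset.mul_sum, ← Finset.mul_sum, ← Finset.mul_sum]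
    -- massage ih at s+1
    have ihm := ih (s + 1)
    simp only [show ∀ k, k + (s + 1) + 1 = k + s + 2 from fun k => by omega,
      show s + 1 + 1 = s + 2 from by omega] at ihm
    have hσ : (∑ k ∈ range n, H k / ((k : ℝ) + ((s : ℕ) + 1 : ℕ) + 1))
        = ∑ k ∈ range n, H k / ((k : ℝ) + (s : ℝ) + 2) := by
      refine Finset.sum_congr rfl fun k _ => ?_
      push_cast; ring_nf
    rw [hσ] at ihm
    rw [ihm, U n s]
    -- massage SA at s+1
    have hSA := SA n (s + 1)
    simp only [show ∀ k, k + (s + 1) + 1 = k + s + 2 from fun k => by omega,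
      show s + 1 + 1 = s + 2 from by omega] at hSA
    rw [hSA]
    -- now pure algebra
    rw [show n + 1 + s = n + s + 1 by omega, Hsucc n, Hsucc s,
      show n + (s + 1) = n + s + 1 by omega]
    rw [L2 n s, Hsucc s]
    push_cast
    have d1 : ((s : ℝ) + 1) ≠ 0 := by positivity
    have d2 : ((s : ℝ) + 2) ≠ 0 := by positivity
    have d3 : ((n : ℝ) + 1) ≠ 0 := by positivity
    have d4 : ((n : ℝ) + (s : ℝ) + 2) ≠ 0 := by positivity
    field_simp
    ring

theorem stmt_12 (n : ℕ) (r : ℕ) (hr : 1 ≤ r) :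
    ∑ k ∈ range (n + 1),
        (-1 : ℝ) ^ (k + 1) * ((Nat.choose n k : ℝ) / (Nat.choose (k + r) r : ℝ)) * H2 k =
      ((r : ℝ) / ((n : ℝ) + r)) *
        (H n * (H (n + r - 1) - H (r - 1)) - ∑ k ∈ range n, H k / ((k : ℝ) + r)) := by
  obtain ⟨s, rfl⟩ : ∃ s, r = s + 1 := ⟨r - 1, by omega⟩
  have conv : ∀ k ∈ range (n + 1),
      (-1 : ℝ) ^ (k + 1) * ((Nat.choose n k : ℝ) / (Nat.choose (k + (s + 1)) (s + 1) : ℝ)) * H2 k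
      = -((-1 : ℝ) ^ k * (n.choose k : ℕ) *
          (1 / (((k + s + 1).choose (s + 1) : ℕ) : ℝ) * H2 k)) := by
    intro k _
    rw [show k + (s + 1) = k + s + 1 by omega, pow_succ]
    ring
  rw [Finset.sum_congr rfl conv, Finset.sum_neg_distrib, main n s]
  rw [show n + (s + 1) - 1 = n + s by omega, show s + 1 - 1 = s by omega]
  have hσ : (∑ k ∈ range n, H k / ((k : ℝ) + ((s : ℕ) + 1 : ℕ)))
      = ∑ k ∈ range n, H k / ((k : ℝ) + (s : ℝ) + 1) := by
    refine Finset.sum_congr rfl fun k _ => ?_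
    push_cast; ring_nf
  rw [hσ]
  push_cast
  ring
end
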